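/- For all complex numbers ℓ with 2ℓ+3 ≠ 0, ℓ ≠ 1, and 4ℓ+3 ≠ 0, the point (c,λ) with c = -3(2ℓ-1)²/(2ℓ+3) and λ = (2ℓ+1)(2ℓ+3)/(8(ℓ-1)(4ℓ+3)) satisfies 48 + 8c + 240λ - 62cλ - 5c²λ + 300λ² + 524cλ² + 40c²λ² = 0. -/

import Mathlib

/-- The Bershadsky–Polyakov Heisenberg coset truncation curve: for `2ℓ+3 ≠ 0`, `ℓ ≠ 1`,
`4ℓ+3 ≠ 0`, the point `(c,λ)` with `c = -3(2ℓ-1)²/(2ℓ+3)` and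
`λ = (2ℓ+1)(2ℓ+3)/(8(ℓ-1)(4ℓ+3))` satisfies the displayed polynomial equation. -/
theorem stmt2 (t : ℂ) (h1 : 2*t+3 ≠ 0) (h2 : t ≠ 1) (h3 : 4*t+3 ≠ 0)
    (c l : ℂ)
    (hc : c = -3*(2*t-1)^2/(2*t+3))
    (hl : l = (2*t+1)*(2*t+3)/(8*(t-1)*(4*t+3))) :
    48 + 8*c + 240*l - 62*c*l - 5*c^2*l + 300*l^2 + 524*c*l^2 + 40*c^2*l^2 = 0 := by
  have h2' : t - 1 ≠ 0 := sub_ne_zero.mpr h2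
  have hd : (8:ℂ)*(t-1)*(4*t+3) ≠ 0 :=
    mul_ne_zero (mul_ne_zero (by norm_num) h2') h3
  have hc' : c*(2*t+3) = -3*(2*t-1)^2 := by
    rw [hc]; field_simp
  have hl' : l*(8*(t-1)*(4*t+3)) = (2*t+1)*(2*t+3) := by
    rw [hl]; exact div_mul_cancel₀ _ hd
  have key : ((2*t+3)^2*((8:ℂ)*(t-1)*(4*t+3))^2) *
      (48 + 8*c + 240*l - 62*c*l - 5*c^2*l + 300*l^2 + 524*c*l^2 + 40*c^2*l^2) = 0 := by
    linear_combination (13824 + (-98496)*l^1 + 836352*l^2 + (-8640)*c^1*l^1 + 69120*c^1*l^2 + 18432*t^1 + (-171648)*t^1*l^1 + 1437696*t^1*l^2 + (-11520)*t^1*c^1*l^1 + 92160*t^1*c^1*l^2 + (-29184)*t^2 + 215616*t^2*l^1 + (-1827072)*t^2*l^2 + 18240*t^2*c^1*l^1 + (-145920)*t^2*c^1*l^2 + (-35840)*t^3 + 381440*t^3*l^1 + (-3176960)*t^3*l^2 + 22400*t^3*c^1*l^1 + (-179200)*t^3*c^1*l^2 + 16384*t^4 + (-169216)*t^4*l^1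 + 1411072*t^4*l^2 + (-10240)*t^4*c^1*l^1 + 81920*t^4*c^1*l^2 + 16384*t^5 + (-219136)*t^5*l^1 + 1810432*t^5*l^2 + (-10240)*t^5*c^1*l^1 + 81920*t^5*c^1*l^2 + 61440*t^6*l^1 + (-491520)*t^6*l^2) * hc' + ((-69120) + 39744*l^1 + (-18432)*t^1 + (-381312)*t^1*l^1 + 195072*t^2 + (-269760)*t^2*l^1 + (-9216)*t^3 + 1075968*t^3*l^1 + (-147456)*t^4 + 168192*t^4*l^1 + 49152*t^5 + (-817152)*t^5*l^1 + 184320*t^6*l^1) * hl'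
  have hD : ((2*t+3)^2*((8:ℂ)*(t-1)*(4*t+3))^2) ≠ 0 :=
    mul_ne_zero (pow_ne_zero _ h1) (pow_ne_zero _ hd)
  exact (mul_eq_zero.mp key).resolve_left hD
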